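/- Let [A] be an interval m×n matrix with midpoint A_c and entrywise-nonnegative radius Δ, and let [x] = [x̲, x̄] be an interval vector in ℝ^n with midpoint x_c = (x̲+x̄)/2, radius ρ = (x̄−x̲)/2 satisfying ρ_j > 0 for all j, and magnitude μ given by μ_j = max(|x̲_j|, |x̄_j|). Suppose A_c has full row rank, so that A_c A_cᵀ is invertible, and let A_c† = A_cᵀ (A_c A_cᵀ)⁻¹ be its Moore–Penrose pseudoinverse. Set r = min_{j=1,…,n} (ρ_j − (|A_c†| Δ μ)_j)/ρ_j, where |A_c†| is the matrix of entrywise absolute values. If r ≥ 0, then Ω_∀∃(A_c, [y]) ⊆ Ω_∀∃([A],[x]), where [y] = [x_c − rρ, x_c + rρ]; that is, for every y ∈ ℝ^n with |y − x_c| ≤ rρ componentwise and every A with |A − A_c| ≤ Δ entrywise, there exists x with x̲ ≤ x ≤ x̄ such that A x = A_c y. -/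
import Mathlib


open Matrix Finset

/-- Zonotope inner approximation of `Ω_∀∃([A],[x])`: with
`r = min_j (ρ_j − (|A_c†| Δ μ)_j)/ρ_j`, if `r ≥ 0` then
`Ω_∀∃(A_c, [x_c − rρ, x_c + rρ]) ⊆ Ω_∀∃([A],[x])`. -/
theorem zonotope_inner_approx_of_omega_forall_exists
    {m n : ℕ} [Nonempty (Fin n)]
    (Ac Δ : Matrix (Fin m) (Fin n) ℝ) (hΔ : ∀ i j, 0 ≤ Δ i j)
    (xl xu : Fin n → ℝ) (hx : ∀ j, xl j ≤ xu j)
    (xc ρ μ : Fin n → ℝ)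
    (hxc : ∀ j, xc j = (xl j + xu j) / 2)
    (hρ : ∀ j, ρ j = (xu j - xl j) / 2)
    (hρpos : ∀ j, 0 < ρ j)
    (hμ : ∀ j, μ j = max |xl j| |xu j|)
    (hrank : IsUnit (Ac * Ac.transpose).det)
    (Adag : Matrix (Fin n) (Fin m) ℝ)
    (hAdag : Adag = Ac.transpose * (Ac * Ac.transpose)⁻¹)
    (r : ℝ)
    (hr : r = Finset.univ.inf' Finset.univ_nonempty
      (fun j => (ρ j - (Adag.map (fun t => |t|)).mulVec (Δ.mulVec μ) j) / ρ j))
    (hr0 : 0 ≤ r) :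
    ∀ y : Fin n → ℝ, (∀ j, |y j - xc j| ≤ r * ρ j) →
      ∀ A : Matrix (Fin m) (Fin n) ℝ, (∀ i j, |A i j - Ac i j| ≤ Δ i j) →
        ∃ x : Fin n → ℝ, (∀ j, xl j ≤ x j ∧ x j ≤ xu j) ∧ A.mulVec x = Ac.mulVec y := by
  intro y hy A hA
  have hAcAdag : Ac * Adag = 1 := by
    rw [hAdag, ← Matrix.mul_assoc, Matrix.mul_nonsing_inv _ hrank]
  set E : Matrix (Fin m) (Fin n) ℝ := A - Ac with hE
  set M : Matrix (Fin n) (Fin n) ℝ := Adag * E with hMdef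
  set g : Fin n → ℝ := fun j => (Adag.map (fun t => |t|)).mulVec (Δ.mulVec μ) j with hg
  set B : Fin n → Fin n → ℝ := fun j k => ∑ i, |Adag j i| * Δ i k with hB
  -- basic facts about μ, ρ, xc
  have hμρ : ∀ j, |xc j| + ρ j = μ j := by
    intro j
    have hj := hx j
    rw [hμ, hxc, hρ]
    rcases le_total 0 (xl j + xu j) with h | h
    · have h2 : (0:ℝ) ≤ xu j := by linarith
      have h1 : |xl j| ≤ |xu j| := by
        rw [abs_of_nonneg h2]; exact abs_le.2 ⟨by linarith, hj⟩
      rw [abs_of_nonneg (by linarith : (0:ℝ) ≤ (xl j + xu j) / 2), max_eq_right h1,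
        abs_of_nonneg h2]
      ring
    · have h2 : xl j ≤ 0 := by linarith
      have h1 : |xu j| ≤ |xl j| := by
        rw [abs_of_nonpos h2]; exact abs_le.2 ⟨by linarith, by linarith⟩
      rw [abs_of_nonpos (by linarith : (xl j + xu j) / 2 ≤ 0), max_eq_left h1,
        abs_of_nonpos h2]
      ring
  have hρμ : ∀ j, ρ j ≤ μ j := fun j => by
    have := hμρ j; have := abs_nonneg (xc j); linarith
  have hμ0 : ∀ j, 0 ≤ μ j := fun j => le_trans (hρpos j).le (hρμ j)
  have hBnn : ∀ j k, 0 ≤ B j k := fun j k =>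
    Finset.sum_nonneg fun i _ => mul_nonneg (abs_nonneg _) (hΔ i k)
  have hgB : ∀ j, ∑ k, B j k * μ k = g j := by
    intro j
    simp only [hg, hB, Matrix.mulVec, dotProduct, Matrix.map_apply]
    simp only [Finset.sum_mul, Finset.mul_sum]
    rw [Finset.sum_comm]
    refine Finset.sum_congr rfl fun i _ => Finset.sum_congr rfl fun k _ => by ring
  have hg0 : ∀ j, 0 ≤ g j := fun j => by
    rw [← hgB j]
    exact Finset.sum_nonneg fun k _ => mul_nonneg (hBnn j k) (hμ0 k)
  have hgr : ∀ j, g j ≤ (1 - r) * ρ j := by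
    intro j
    have h1 : r ≤ (ρ j - g j) / ρ j := by
      rw [hr]; exact Finset.inf'_le _ (Finset.mem_univ j)
    have := (le_div_iff₀ (hρpos j)).1 h1
    nlinarith
  have hr1 : r ≤ 1 := by
    obtain ⟨j⟩ := ‹Nonempty (Fin n)›
    have h1 : r ≤ (ρ j - g j) / ρ j := by
      rw [hr]; exact Finset.inf'_le _ (Finset.mem_univ j)
    have h2 : (ρ j - g j) / ρ j ≤ 1 := by
      rw [div_le_one (hρpos j)]; linarith [hg0 j]
    linarith
  -- |M j k| ≤ B j k
  have hMB : ∀ j k, |M j k| ≤ B j k := by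
    intro j k
    have : M j k = ∑ i, Adag j i * E i k := rfl
    rw [this]
    refine le_trans (Finset.abs_sum_le_sum_abs _ _) (Finset.sum_le_sum fun i _ => ?_)
    rw [abs_mul]
    exact mul_le_mul_of_nonneg_left (hA i k) (abs_nonneg _)
  -- general bound on M *ᵥ v
  have hMvec : ∀ (v w : Fin n → ℝ), (∀ k, |v k| ≤ w k) → ∀ j,
      |∑ k, M j k * v k| ≤ ∑ k, B j k * w k := by
    intro v w hvw j
    refine le_trans (Finset.abs_sum_le_sum_abs _ _) (Finset.sum_le_sum fun k _ => ?_)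
    rw [abs_mul]
    exact mul_le_mul (hMB j k) (hvw k) (abs_nonneg _) (hBnn j k)
  have hBρ : ∀ j, ∑ k, B j k * ρ k ≤ (1 - r) * ρ j := by
    intro j
    refine le_trans ?_ (le_trans (le_of_eq (hgB j)) (hgr j))
    exact Finset.sum_le_sum fun k _ => mul_le_mul_of_nonneg_left (hρμ k) (hBnn j k)
  -- key existence for each t < 1
  have key : ∀ t : ℝ, 0 ≤ t → t < 1 → ∃ x : Fin n → ℝ,
      (∀ j, |x j - xc j| ≤ ρ j) ∧ ∀ j, x j = y j - t * ∑ k, M j k * x k := by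
    intro t ht0 ht1
    set c : Fin n → ℝ := fun j => xc j / ρ j with hc
    set F : (Fin n → ℝ) → (Fin n → ℝ) :=
      fun v j => (y j - t * ∑ k, M j k * (ρ k * v k)) / ρ j with hF
    have hlip : ∀ a b, dist (F a) (F b) ≤ t * dist a b := by
      intro a b
      rw [dist_pi_le_iff (mul_nonneg ht0 dist_nonneg)]
      intro j
      rw [Real.dist_eq]
      have hd : F a j - F b j = -(t * ∑ k, M j k * (ρ k * (a k - b k))) / ρ j := by
        simp only [hF]
        rw [div_sub_div_same]
        congr 1
        have hs : ∑ k, M j k * (ρ k * (a k - b k)) =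
            (∑ k, M j k * (ρ k * a k)) - ∑ k, M j k * (ρ k * b k) := by
          rw [← Finset.sum_sub_distrib]
          exact Finset.sum_congr rfl fun k _ => by ring
        rw [hs]; ring
      rw [hd, abs_div, abs_of_pos (hρpos j), abs_neg, abs_mul, abs_of_nonneg ht0,
        div_le_iff₀ (hρpos j)]
      have hb : |∑ k, M j k * (ρ k * (a k - b k))| ≤ ∑ k, B j k * (ρ k * dist a b) := by
        refine hMvec _ _ (fun k => ?_) j
        rw [abs_mul, abs_of_pos (hρpos k)]
        refine mul_le_mul_of_nonneg_left ?_ (hρpos k).le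
        rw [← Real.dist_eq]
        exact dist_le_pi_dist a b k
      have hb2 : ∑ k, B j k * (ρ k * dist a b) ≤ (1 - r) * ρ j * dist a b := by
        have : ∑ k, B j k * (ρ k * dist a b) = (∑ k, B j k * ρ k) * dist a b := by
          rw [Finset.sum_mul]; congr 1; ext k; ring
        rw [this]
        exact mul_le_mul_of_nonneg_right (hBρ j) dist_nonneg
      have hdn : (0:ℝ) ≤ dist a b := dist_nonneg
      have haux : 0 ≤ t * dist a b * (r * ρ j) :=
        mul_nonneg (mul_nonneg ht0 hdn) (mul_nonneg hr0 (hρpos j).le)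
      calc t * |∑ k, M j k * (ρ k * (a k - b k))| ≤ t * ((1 - r) * ρ j * dist a b) :=
            mul_le_mul_of_nonneg_left (le_trans hb hb2) ht0
        _ ≤ t * dist a b * ρ j := by nlinarith [haux]
    have hcontr : ContractingWith ⟨t, ht0⟩ F :=
      ⟨by exact_mod_cast ht1, LipschitzWith.of_dist_le_mul hlip⟩
    -- invariance of the box
    have hinv : ∀ v : Fin n → ℝ, (∀ k, |v k - c k| ≤ 1) → ∀ j, |F v j - c j| ≤ 1 := by
      intro v hv j
      have hFc : F v j - c j = (y j - xc j - t * ∑ k, M j k * (ρ k * v k)) / ρ j := by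
        simp only [hF, hc]
        rw [div_sub_div_same]
        congr 1; ring
      rw [hFc, abs_div, abs_of_pos (hρpos j), div_le_one (hρpos j)]
      have hvb : ∀ k, |ρ k * v k| ≤ μ k := by
        intro k
        have h1 : |v k| ≤ |c k| + 1 := by
          have := hv k; have := abs_sub_abs_le_abs_sub (v k) (c k); linarith
        have h2 : ρ k * |c k| = |xc k| := by
          show ρ k * |xc k / ρ k| = |xc k|
          rw [abs_div, abs_of_pos (hρpos k), mul_comm,
            div_mul_cancel₀ _ (ne_of_gt (hρpos k))]
        rw [abs_mul, abs_of_pos (hρpos k)]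
        calc ρ k * |v k| ≤ ρ k * (|c k| + 1) := mul_le_mul_of_nonneg_left h1 (hρpos k).le
          _ = ρ k * |c k| + ρ k := by ring
          _ = |xc k| + ρ k := by rw [h2]
          _ = μ k := hμρ k
      have hMv : |∑ k, M j k * (ρ k * v k)| ≤ g j := by
        rw [← hgB j]; exact hMvec _ _ hvb j
      have h3 : |y j - xc j - t * ∑ k, M j k * (ρ k * v k)| ≤
          r * ρ j + t * g j := by
        refine le_trans (abs_sub _ _) ?_
        gcongr
        · exact hy j
        · rw [abs_mul, abs_of_nonneg ht0]
          exact mul_le_mul_of_nonneg_left hMv ht0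
      refine le_trans h3 ?_
      have := hgr j
      nlinarith [hρpos j, hg0 j]
    -- the fixed point
    set v : Fin n → ℝ := ContractingWith.fixedPoint F hcontr with hv
    have hiter : ∀ N : ℕ, ∀ j, |(F^[N] c) j - c j| ≤ 1 := by
      intro N
      induction N with
      | zero => intro j; simp
      | succ N ih =>
        intro j
        rw [Function.iterate_succ_apply']
        exact hinv _ ih j
    have hvbox : ∀ j, |v j - c j| ≤ 1 := by
      intro j
      have h1 : Filter.Tendsto (fun N => (F^[N] c) j) Filter.atTop (nhds (v j)) :=
        (tendsto_pi_nhds.1 (hcontr.tendsto_iterate_fixedPoint c)) j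
      have h2 : Filter.Tendsto (fun N => |(F^[N] c) j - c j|) Filter.atTop
          (nhds (|v j - c j|)) := (h1.sub tendsto_const_nhds).abs
      exact le_of_tendsto h2 (Filter.Eventually.of_forall fun N => hiter N j)
    have hvfix : F v = v := hcontr.fixedPoint_isFixedPt
    refine ⟨fun j => ρ j * v j, fun j => ?_, fun j => ?_⟩
    · have : ρ j * v j - xc j = ρ j * (v j - c j) := by
        have hcc : c j = xc j / ρ j := rfl
        rw [hcc, mul_sub, mul_comm (ρ j) (xc j / ρ j),
          div_mul_cancel₀ _ (ne_of_gt (hρpos j))]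
      rw [this, abs_mul, abs_of_pos (hρpos j)]
      calc ρ j * |v j - c j| ≤ ρ j * 1 := mul_le_mul_of_nonneg_left (hvbox j) (hρpos j).le
        _ = ρ j := mul_one _
    · have h1 : (y j - t * ∑ k, M j k * (ρ k * v k)) / ρ j = v j := congrFun hvfix j
      rw [div_eq_iff (ne_of_gt (hρpos j))] at h1
      show ρ j * v j = y j - t * ∑ k, M j k * (ρ k * v k)
      linarith [h1]
  -- algebra: from the fixed point equation deduce the residual identity
  have hAcM : Ac * M = E := by
    rw [hMdef, ← Matrix.mul_assoc, hAcAdag, Matrix.one_mul]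
  have halg : ∀ (t : ℝ) (x : Fin n → ℝ), (∀ j, x j = y j - t * ∑ k, M j k * x k) →
      ∀ i, A.mulVec x i = Ac.mulVec y i + (1 - t) * E.mulVec x i := by
    intro t x hxeq i
    have hxv : x = y - t • M.mulVec x := by
      funext j
      simp only [Pi.sub_apply, Pi.smul_apply, smul_eq_mul, Matrix.mulVec, dotProduct]
      exact hxeq j
    have h1 : Ac.mulVec (M.mulVec x) = E.mulVec x := by
      rw [Matrix.mulVec_mulVec, hAcM]
    have h2 : Ac.mulVec x = Ac.mulVec y - t • E.mulVec x := by
      conv_lhs => rw [hxv]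
      rw [Matrix.mulVec_sub, Matrix.mulVec_smul, h1]
    have h3 : A.mulVec x = Ac.mulVec x + E.mulVec x := by
      have hAE : A = Ac + E := by rw [hE]; abel
      conv_lhs => rw [hAE]
      rw [Matrix.add_mulVec]
    rw [h3, h2]
    simp only [Pi.add_apply, Pi.sub_apply, Pi.smul_apply, smul_eq_mul]
    ring
  -- the sequence t_N = 1 - 1/(N+1)
  have hts : ∀ N : ℕ, (0:ℝ) ≤ 1 - 1 / (N + 1) ∧ 1 - 1 / ((N:ℝ) + 1) < 1 := by
    intro N
    have h1 : (0:ℝ) < (N:ℝ) + 1 := by positivity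
    constructor
    · have : 1 / ((N:ℝ) + 1) ≤ 1 := by
        rw [div_le_one h1]; linarith [Nat.cast_nonneg (α := ℝ) N]
      linarith
    · have : 0 < 1 / ((N:ℝ) + 1) := by positivity
      linarith
  choose xs hxs1 hxs2 using fun N : ℕ =>
    key (1 - 1 / ((N:ℝ) + 1)) (hts N).1 (hts N).2
  -- the sequence lies in the compact box
  have hmem : ∀ N, xs N ∈ Set.Icc xl xu := by
    intro N
    rw [Set.mem_Icc]
    constructor
    · intro j
      have h1 := abs_le.1 (hxs1 N j)
      have h2 := hxc j; have h3 := hρ j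
      linarith [h1.1]
    · intro j
      have h1 := abs_le.1 (hxs1 N j)
      have h2 := hxc j; have h3 := hρ j
      linarith [h1.2]
  have hcomp : IsCompact (Set.Icc xl xu) := isCompact_Icc
  obtain ⟨x, hxmem, φ, hφ, hconv⟩ := hcomp.tendsto_subseq hmem
  obtain ⟨hxm1, hxm2⟩ := Set.mem_Icc.1 hxmem
  refine ⟨x, fun j => ⟨hxm1 j, hxm2 j⟩, ?_⟩
  funext i
  have hcoord : ∀ j, Filter.Tendsto (fun N => xs (φ N) j) Filter.atTop (nhds (x j)) := by
    intro j
    have := tendsto_pi_nhds.1 hconv j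
    simpa [Function.comp] using this
  have hlim1 : Filter.Tendsto (fun N => A.mulVec (xs (φ N)) i) Filter.atTop
      (nhds (A.mulVec x i)) := by
    have hz : ∀ z : Fin n → ℝ, A.mulVec z i = ∑ j, A i j * z j := fun z => rfl
    simp only [hz]
    exact tendsto_finset_sum _ fun j _ => (hcoord j).const_mul (A i j)
  have heq : ∀ N : ℕ, A.mulVec (xs (φ N)) i =
      Ac.mulVec y i + (1 / ((φ N : ℝ) + 1)) * E.mulVec (xs (φ N)) i := by
    intro N
    have h := halg _ _ (hxs2 (φ N)) i
    rw [h]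
    ring_nf
  set C : ℝ := ∑ j, Δ i j * μ j with hC
  have hbC : ∀ N : ℕ, |E.mulVec (xs (φ N)) i| ≤ C := by
    intro N
    have hz : E.mulVec (xs (φ N)) i = ∑ j, E i j * xs (φ N) j := rfl
    rw [hz, hC]
    refine le_trans (Finset.abs_sum_le_sum_abs _ _) (Finset.sum_le_sum fun j _ => ?_)
    rw [abs_mul]
    refine mul_le_mul (hA i j) ?_ (abs_nonneg _) (hΔ i j)
    have h1 := hxs1 (φ N) j
    have h2 := hμρ j
    have h3 := abs_sub_abs_le_abs_sub (xs (φ N) j) (xc j)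
    linarith
  have htend0 : Filter.Tendsto (fun N : ℕ => 1 / ((φ N : ℝ) + 1)) Filter.atTop (nhds 0) := by
    have h1 : Filter.Tendsto (fun N : ℕ => 1 / ((N : ℝ) + 1)) Filter.atTop (nhds 0) :=
      tendsto_one_div_add_atTop_nhds_zero_nat
    exact h1.comp hφ.tendsto_atTop
  have hlim0 : Filter.Tendsto (fun N : ℕ => (1 / ((φ N : ℝ) + 1)) * E.mulVec (xs (φ N)) i)
      Filter.atTop (nhds 0) := by
    refine squeeze_zero_norm (a := fun N : ℕ => (1 / ((φ N : ℝ) + 1)) * C) (fun N => ?_) ?_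
    · have hp : (0:ℝ) ≤ 1 / ((φ N : ℝ) + 1) := by positivity
      rw [Real.norm_eq_abs, abs_mul, abs_of_nonneg hp]
      exact mul_le_mul_of_nonneg_left (hbC N) hp
    · have := htend0.mul_const C
      simpa using this
  have hlim2 : Filter.Tendsto (fun N : ℕ => A.mulVec (xs (φ N)) i) Filter.atTop
      (nhds (Ac.mulVec y i)) := by
    have h1 : Filter.Tendsto
        (fun N : ℕ => Ac.mulVec y i + (1 / ((φ N : ℝ) + 1)) * E.mulVec (xs (φ N)) i)
        Filter.atTop (nhds (Ac.mulVec y i + 0)) := tendsto_const_nhds.add hlim0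
    rw [add_zero] at h1
    exact h1.congr fun N => (heq N).symm
  exact tendsto_nhds_unique hlim1 hlim2
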